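/- An MTP2 probability distribution $p$ on $\{-1,1\}^d$ (with $d \geq 2$) has full support (i.e., $p(x) > 0$ for all $x$) if and only if every pair-marginal $p_{ij}$, $i \neq j$, has full support on $\{-1,1\}^2$. -/
import Mathlib


def IsProb {X : Type*} [Fintype X] (p : X → ℝ) : Prop :=
  (∀ x, 0 ≤ p x) ∧ ∑ x, p x = 1

def MTP2 {d : ℕ} (p : (Fin d → Bool) → ℝ) : Prop :=
  ∀ x y, p x * p y ≤ p (x ⊔ y) * p (x ⊓ y)

lemma mtp2_both_pos {d : ℕ} {p : (Fin d → Bool) → ℝ}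
    (hnn : ∀ x, 0 ≤ p x) (hm : MTP2 p) {x y : Fin d → Bool}
    (hx : 0 < p x) (hy : 0 < p y) : 0 < p (x ⊔ y) ∧ 0 < p (x ⊓ y) := by
  have h1 : 0 < p (x ⊔ y) * p (x ⊓ y) := lt_of_lt_of_le (mul_pos hx hy) (hm x y)
  constructor
  · rcases (hnn (x ⊔ y)).lt_or_eq with h | h
    · exact h
    · exfalso; rw [← h, zero_mul] at h1; exact lt_irrefl 0 h1
  · rcases (hnn (x ⊓ y)).lt_or_eq with h | h
    · exact h
    · exfalso; rw [← h, mul_zero] at h1; exact lt_irrefl 0 h1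

lemma mtp2_inf'_pos {d : ℕ} {p : (Fin d → Bool) → ℝ}
    (hnn : ∀ x, 0 ≤ p x) (hm : MTP2 p) {ι : Type*} (s : Finset ι) (hs : s.Nonempty)
    (f : ι → Fin d → Bool) (hf : ∀ i ∈ s, 0 < p (f i)) : 0 < p (s.inf' hs f) := by
  induction hs using Finset.Nonempty.cons_induction with
  | singleton a => simpa using hf a (by simp)
  | cons a s ha hs ih =>
      rw [Finset.inf'_cons]
      exact (mtp2_both_pos hnn hm (hf a (Finset.mem_cons_self a s))
        (ih (fun i hi => hf i (Finset.mem_cons_of_mem hi)))).2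

lemma mtp2_sup'_pos {d : ℕ} {p : (Fin d → Bool) → ℝ}
    (hnn : ∀ x, 0 ≤ p x) (hm : MTP2 p) {ι : Type*} (s : Finset ι) (hs : s.Nonempty)
    (f : ι → Fin d → Bool) (hf : ∀ i ∈ s, 0 < p (f i)) : 0 < p (s.sup' hs f) := by
  induction hs using Finset.Nonempty.cons_induction with
  | singleton a => simpa using hf a (by simp)
  | cons a s ha hs ih =>
      rw [Finset.sup'_cons]
      exact (mtp2_both_pos hnn hm (hf a (Finset.mem_cons_self a s))
        (ih (fun i hi => hf i (Finset.mem_cons_of_mem hi)))).1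

theorem stmt11 {d : ℕ} (hd : 2 ≤ d) (p : (Fin d → Bool) → ℝ)
    (hp : IsProb p) (hm : MTP2 p) :
    (∀ x, 0 < p x) ↔
      ∀ i j : Fin d, i ≠ j → ∀ a b : Bool,
        0 < ∑ y ∈ Finset.univ.filter (fun y : Fin d → Bool => y i = a ∧ y j = b), p y := by
  obtain ⟨hnn, _⟩ := hp
  constructor
  · intro hpos i j hij a b
    apply Finset.sum_pos (fun y _ => hpos y)
    refine ⟨fun k => if k = i then a else if k = j then b else true, ?_⟩
    simp only [Finset.mem_filter, Finset.mem_univ, true_and]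
    constructor
    · simp
    · simp [Ne.symm hij]
  · intro h z
    -- extract witnesses from pair marginals
    have H : ∀ i j : Fin d, i ≠ j → ∃ y : Fin d → Bool,
        0 < p y ∧ y i = z i ∧ y j = z j := by
      intro i j hij
      have := h i j hij (z i) (z j)
      have h0 : (∑ y ∈ Finset.univ.filter
          (fun y : Fin d → Bool => y i = z i ∧ y j = z j), (0:ℝ)) <
          ∑ y ∈ Finset.univ.filter
          (fun y : Fin d → Bool => y i = z i ∧ y j = z j), p y := by
        simpa using this
      obtain ⟨y, hy, hy2⟩ := Finset.exists_lt_of_sum_lt h0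
      simp only [Finset.mem_filter, Finset.mem_univ, true_and] at hy
      exact ⟨y, hy2, hy.1, hy.2⟩
    classical
    choose w hw1 hw2 hw3 using H
    set s : Fin d → Fin d → (Fin d → Bool) :=
      fun i j => if hij : i ≠ j then w i j hij else z with hs_def
    have hspos : ∀ i j, i ≠ j → 0 < p (s i j) := by
      intro i j hij; simp only [hs_def, dif_pos hij]; exact hw1 i j hij
    have hsi : ∀ i j (hij : i ≠ j), s i j i = z i := by
      intro i j hij; simp only [hs_def, dif_pos hij]; exact hw2 i j hij
    have hsj : ∀ i j (hij : i ≠ j), s i j j = z j := by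
      intro i j hij; simp only [hs_def, dif_pos hij]; exact hw3 i j hij
    have huniv : (Finset.univ : Finset (Fin d)).Nonempty :=
      ⟨⟨0, by omega⟩, Finset.mem_univ _⟩
    have herase : ∀ i : Fin d, (Finset.univ.erase i).Nonempty := by
      intro i
      rw [← Finset.card_pos, Finset.card_erase_of_mem (Finset.mem_univ i)]
      simp only [Finset.card_univ, Fintype.card_fin]
      omega
    set t : Fin d → (Fin d → Bool) :=
      fun i => (Finset.univ.erase i).inf' (herase i) (s i) with ht_def
    have htpos : ∀ i, 0 < p (t i) := by
      intro i
      exact mtp2_inf'_pos hnn hm _ (herase i) (s i)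
        (fun j hj => hspos i j (Ne.symm (Finset.ne_of_mem_erase hj)))
    have hti : ∀ i, t i i = z i := by
      intro i
      rw [ht_def]
      simp only [Finset.inf'_apply]
      apply le_antisymm
      · obtain ⟨j, hj⟩ := herase i
        exact le_trans (Finset.inf'_le _ hj)
          (le_of_eq (by rw [hsi i j (Ne.symm (Finset.ne_of_mem_erase hj))]))
      · exact Finset.le_inf' _ _ (fun j hj => le_of_eq
          (by rw [hsi i j (Ne.symm (Finset.ne_of_mem_erase hj))]))
    have htk : ∀ i k, i ≠ k → t i k ≤ z k := by
      intro i k hik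
      rw [ht_def]
      simp only [Finset.inf'_apply]
      have hk : k ∈ Finset.univ.erase i := Finset.mem_erase.mpr ⟨Ne.symm hik, Finset.mem_univ _⟩
      exact le_trans (Finset.inf'_le _ hk) (le_of_eq (hsj i k hik))
    set u : Fin d → Bool := Finset.univ.sup' huniv t with hu_def
    have hupos : 0 < p u := mtp2_sup'_pos hnn hm _ huniv t (fun i _ => htpos i)
    have huz : u = z := by
      funext k
      rw [hu_def]
      simp only [Finset.sup'_apply]
      apply le_antisymm
      · apply Finset.sup'_le
        intro i _
        by_cases hik : i = k
        · subst hik; exact le_of_eq (hti i)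
        · exact htk i k hik
      · exact le_trans (le_of_eq (hti k).symm) (Finset.le_sup' (fun i => t i k) (Finset.mem_univ k))
    rwa [huz] at hupos
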